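/- For every real number θ, the matrix U_SPE(θ) maps the orthonormal product basis {(|00⟩+|10⟩)/√2, (|00⟩−|10⟩)/√2, (|01⟩+|11⟩)/√2, (|01⟩−|11⟩)/√2} to the orthonormal maximally entangled basis {(|00⟩+|11⟩)/√2, (|00⟩−|11⟩)/√2, (|01⟩+|10⟩)/√2, e^{−iθ}(|01⟩−|10⟩)/√2}, respectively; each image state has concurrence 1. -/

import Mathlib

open Matrix Complex
open scoped Matrix Kronecker

noncomputable section

/-- computational basis vector |ab⟩ of ℂ⁴ = ℂ²⊗ℂ², indexed by pairs -/
def ket (a b : Fin 2) : Fin 2 × Fin 2 → ℂ := fun p => if p = (a, b) then 1 else 0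

/-- concurrence C = 2|αδ − βγ| of a two-qubit state with components (α,β,γ,δ) -/
def conc (v : Fin 2 × Fin 2 → ℂ) : ℝ :=
  2 * ‖v (0, 0) * v (1, 1) - v (0, 1) * v (1, 0)‖

/-- hermitian inner product on ℂ⁴ -/
def ip (v w : Fin 2 × Fin 2 → ℂ) : ℂ :=
  ∑ p : Fin 2 × Fin 2, (starRingEnd ℂ) (v p) * w p

/-- the index identification (a,b) ↦ 2a+b matching the ordered basis (|00⟩,|01⟩,|10⟩,|11⟩) -/
def idx : Fin 2 × Fin 2 → Fin 4 :=
  fun p => ⟨2 * p.1.1 + p.2.1, by have h1 := p.1.isLt; have h2 := p.2.isLt; omega⟩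

/-- the SPE circuit matrix U_SPE(θ), in the ordered basis (|00⟩,|01⟩,|10⟩,|11⟩);
it sends |00⟩↦|00⟩, |01⟩↦((1+e^{−iθ})/2)|01⟩+((1−e^{−iθ})/2)|10⟩, |10⟩↦|11⟩,
|11⟩↦((1−e^{−iθ})/2)|01⟩+((1+e^{−iθ})/2)|10⟩. -/
def USPE (θ : ℝ) : Matrix (Fin 2 × Fin 2) (Fin 2 × Fin 2) ℂ :=
  Matrix.of fun p q =>
    (!![1, 0, 0, 0;
        0, (1 + Complex.exp (-Complex.I * (θ : ℂ))) / 2, 0,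
           (1 - Complex.exp (-Complex.I * (θ : ℂ))) / 2;
        0, (1 - Complex.exp (-Complex.I * (θ : ℂ))) / 2, 0,
           (1 + Complex.exp (-Complex.I * (θ : ℂ))) / 2;
        0, 0, 1, 0]) (idx p) (idx q)

/-- the orthonormal product basis {(|00⟩±|10⟩)/√2, (|01⟩±|11⟩)/√2} -/
def prodBasis : Fin 4 → (Fin 2 × Fin 2 → ℂ) :=
  ![((Real.sqrt 2 : ℂ))⁻¹ • (ket 0 0 + ket 1 0),
    ((Real.sqrt 2 : ℂ))⁻¹ • (ket 0 0 - ket 1 0),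
    ((Real.sqrt 2 : ℂ))⁻¹ • (ket 0 1 + ket 1 1),
    ((Real.sqrt 2 : ℂ))⁻¹ • (ket 0 1 - ket 1 1)]

/-- the maximally entangled basis
{(|00⟩+|11⟩)/√2, (|00⟩−|11⟩)/√2, (|01⟩+|10⟩)/√2, e^{−iθ}(|01⟩−|10⟩)/√2} -/
def entBasis (θ : ℝ) : Fin 4 → (Fin 2 × Fin 2 → ℂ) :=
  ![((Real.sqrt 2 : ℂ))⁻¹ • (ket 0 0 + ket 1 1),
    ((Real.sqrt 2 : ℂ))⁻¹ • (ket 0 0 - ket 1 1),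
    ((Real.sqrt 2 : ℂ))⁻¹ • (ket 0 1 + ket 1 0),
    (Complex.exp (-Complex.I * (θ : ℂ)) * ((Real.sqrt 2 : ℂ))⁻¹) • (ket 0 1 - ket 1 0)]

set_option maxHeartbeats 2000000 in
/-- U_SPE(θ) maps the orthonormal product basis to the corresponding orthonormal
maximally entangled basis; each image state has concurrence 1. -/
theorem stmt14 (θ : ℝ) :
    (∀ i, (USPE θ).mulVec (prodBasis i) = entBasis θ i) ∧
    (∀ i j, ip (prodBasis i) (prodBasis j) = if i = j then 1 else 0) ∧
    (∀ i, conc (prodBasis i) = 0) ∧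
    (∀ i j, ip (entBasis θ i) (entBasis θ j) = if i = j then 1 else 0) ∧
    (∀ i, conc (entBasis θ i) = 1) := by
  have hs : ((Real.sqrt 2 : ℝ) : ℂ) * ((Real.sqrt 2 : ℝ) : ℂ) = 2 := by
    norm_cast; exact Real.mul_self_sqrt (by norm_num)
  have hhalf : ((Real.sqrt 2 : ℂ))⁻¹ ^ 2 = 1/2 := by
    rw [inv_pow, sq, hs]; norm_num
  have he2 : Complex.exp (-(Complex.I * (θ : ℂ))) *
      (starRingEnd ℂ) (Complex.exp (-(Complex.I * (θ : ℂ)))) = 1 := by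
    rw [mul_comm, ← Complex.exp_conj, ← Complex.exp_add]
    simp [Complex.conj_ofReal]
  have habs : ‖Complex.exp (-(Complex.I * (θ : ℂ)))‖ = 1 := by
    rw [Complex.norm_exp]; simp
  have hr : |Real.sqrt 2| = Real.sqrt 2 := abs_of_nonneg (Real.sqrt_nonneg 2)
  have hr2 : (2:ℝ) * ((Real.sqrt 2)⁻¹ * (Real.sqrt 2)⁻¹) = 1 := by
    rw [← mul_inv, Real.mul_self_sqrt (by norm_num)]; norm_num
  refine ⟨?_, ?_, ?_, ?_, ?_⟩
  · intro i
    ext p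
    fin_cases i <;> fin_cases p <;>
      simp [USPE, prodBasis, entBasis, ket, Matrix.mulVec, dotProduct, idx,
        Fintype.sum_prod_type, Fin.sum_univ_two, Prod.ext_iff,
        Matrix.vecHead, Matrix.vecTail] <;> ring
  · intro i j
    fin_cases i <;> fin_cases j <;>
      simp [ip, prodBasis, ket, Fintype.sum_prod_type, Fin.sum_univ_two,
        Prod.ext_iff, map_inv₀, Complex.conj_ofReal, Matrix.vecHead, Matrix.vecTail] <;>
      first
        | done
        | ((field_simp <;> rw [sq, hs] <;> norm_num) <;> done)
  · intro i
    fin_cases i <;> simp [conc, prodBasis, ket, Prod.ext_iff,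
      Matrix.vecHead, Matrix.vecTail]
  · intro i j
    fin_cases i <;> fin_cases j <;>
      simp [ip, entBasis, ket, Fintype.sum_prod_type, Fin.sum_univ_two,
        Prod.ext_iff, map_inv₀, Complex.conj_ofReal, Matrix.vecHead, Matrix.vecTail,
        hhalf] <;>
      first
        | done
        | linear_combination 2*((Real.sqrt 2:ℂ))⁻¹^2 * he2 + 2 * hhalf
        | linear_combination 2 * he2
        | ((field_simp <;> rw [sq, hs] <;> norm_num) <;> done)
  · intro i
    fin_cases i <;>
      simp [conc, entBasis, ket, Prod.ext_iff, Matrix.vecHead, Matrix.vecTail,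
        habs, hr] <;>
      first
        | done
        | (simpa [habs, hr] using hr2)
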